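/- arXiv:2208.06490 — 7 statements merged into one kernel-verified Lean document; each statement's English description precedes it below -/
import Mathlib

section
/- Let n ≥ m ≥ 0 be integers, τ > 0, and let a_0,…,a_{n-1}, b_0,…,b_m be real numbers. Consider the entire function Δ : ℂ → ℂ given by Δ(s) = s^n + Σ_{k=0}^{n-1} a_k s^k + e^{-sτ} Σ_{k=0}^{m} b_k s^k. Then no point s_0 ∈ ℂ is a root of Δ of multiplicity greater than n + m + 1; that is, there is no s_0 ∈ ℂ such that the iterated derivatives Δ^{(j)}(s_0) vanish for all j = 0, 1, …, n + m + 1. -/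
open Polynomial Complex
set_option maxRecDepth 8000

noncomputable def Lop (c : ℂ) (Q : ℂ[X]) : ℂ[X] := derivative Q + c • Q

lemma Lop_zero (c : ℂ) {Q : ℂ[X]} (hc : c ≠ 0) (h : Lop c Q = 0) : Q = 0 := by
  by_contra hQ
  have hcoeff : (Lop c Q).coeff Q.natDegree = c * Q.leadingCoeff := by
    rw [Lop, coeff_add, Polynomial.coeff_derivative, coeff_smul,
      Polynomial.coeff_natDegree_succ_eq_zero]
    rw [Polynomial.leadingCoeff, smul_eq_mul, zero_mul, zero_add]
  rw [h, coeff_zero] at hcoeff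
  exact hQ (leadingCoeff_eq_zero.mp (by
    rcases mul_eq_zero.mp hcoeff.symm with h1 | h2
    · exact absurd h1 hc
    · exact h2))

lemma Lop_natDegree_le (c : ℂ) {Q : ℂ[X]} {m : ℕ} (h : Q.natDegree ≤ m) :
    (Lop c Q).natDegree ≤ m := by
  refine (natDegree_add_le _ _).trans (max_le ?_ ?_)
  · exact ((natDegree_derivative_le Q).trans (Nat.sub_le _ _)).trans h
  · exact (natDegree_smul_le _ _).trans h

lemma poly_eq_zero_of_derivs {f : ℂ[X]} {r : ℂ} {m : ℕ} (hd : f.natDegree ≤ m)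
    (h : ∀ k ≤ m, ((⇑Polynomial.derivative)^[k] f).eval r = 0) : f = 0 := by
  apply taylor_injective r
  rw [map_zero]
  ext k
  rw [taylor_coeff, coeff_zero]
  by_cases hk : k ≤ m
  · have hs : (⇑Polynomial.derivative)^[k] f = (Nat.factorial k) • (hasseDeriv k f) := by
      rw [← factorial_smul_hasseDeriv (R := ℂ) k]; rfl
    have h1 := h k hk
    rw [hs, eval_smul, smul_eq_zero] at h1
    rcases h1 with h1 | h1
    · exact absurd h1 (Nat.factorial_ne_zero k)
    · exact h1
  · have hlt : ((taylor r) f).natDegree < k := by rw [natDegree_taylor]; omega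
    rw [← taylor_coeff]; exact coeff_eq_zero_of_natDegree_lt hlt

lemma Lop_iterate_eq (c : ℂ) (Q : ℂ[X]) (j : ℕ) :
    (Lop c)^[j] Q = (((Polynomial.derivative : Module.End ℂ ℂ[X]) + c • 1) ^ j) Q := by
  induction j with
  | zero => simp
  | succ j ih =>
      rw [Function.iterate_succ_apply', ih, pow_succ', Module.End.mul_apply]
      simp [Lop, LinearMap.add_apply, LinearMap.smul_apply]

lemma deriv_vanish (c : ℂ) (R : ℂ[X]) (r : ℂ) (m : ℕ)
    (h : ∀ i ≤ m, ((Lop c)^[i] R).eval r = 0) :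
    ∀ k ≤ m, ((⇑Polynomial.derivative)^[k] R).eval r = 0 := by
  intro k hk
  have hD : (⇑(Polynomial.derivative : ℂ[X] →ₗ[ℂ] ℂ[X]))^[k] R
      = ((Polynomial.derivative : Module.End ℂ ℂ[X]) ^ k) R :=
    (Module.End.pow_apply _ _ _).symm
  set ℓ : Module.End ℂ ℂ[X] := Polynomial.derivative + c • 1 with hℓ
  have hsplit : (Polynomial.derivative : Module.End ℂ ℂ[X]) = ℓ + (-c) • 1 := by
    rw [hℓ, add_assoc, ← add_smul]
    simp
  have hcomm : Commute ℓ ((-c) • (1 : Module.End ℂ ℂ[X])) :=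
    (Commute.one_right ℓ).smul_right _
  rw [hD, hsplit, hcomm.add_pow]
  rw [LinearMap.sum_apply, eval_finset_sum]
  apply Finset.sum_eq_zero
  intro i hi
  have hi' : i ≤ m := le_trans (Nat.lt_succ_iff.mp (Finset.mem_range.mp hi)) hk
  have hterm : (ℓ ^ i * ((-c) • 1) ^ (k - i) * (k.choose i : Module.End ℂ ℂ[X])) R
      = (k.choose i : ℂ) • ((-c) ^ (k - i) • ((ℓ ^ i) R)) := by
    rw [Module.End.mul_apply, Module.End.mul_apply, Module.End.natCast_apply,
      _root_.smul_pow, one_pow, LinearMap.smul_apply, Module.End.one_apply]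
    rw [map_smul, map_nsmul, smul_comm, Nat.cast_smul_eq_nsmul ℂ]
  rw [hterm, eval_smul, eval_smul, ← Lop_iterate_eq, h i hi']
  simp

lemma iter_deriv_formula (c : ℂ) (P Q : ℂ[X]) (j : ℕ) :
    iteratedDeriv j (fun s : ℂ => P.eval s + Complex.exp (c * s) * Q.eval s)
    = fun s : ℂ => ((⇑Polynomial.derivative)^[j] P).eval s
        + Complex.exp (c * s) * ((Lop c)^[j] Q).eval s := by
  induction j with
  | zero => simp
  | succ j ih =>
    rw [iteratedDeriv_succ, ih]
    funext x
    have hP : HasDerivAt (fun s : ℂ => ((⇑Polynomial.derivative)^[j] P).eval s)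
        ((Polynomial.derivative ((⇑Polynomial.derivative)^[j] P)).eval x) x :=
      Polynomial.hasDerivAt _ x
    have h1 : HasDerivAt (fun s : ℂ => c * s) c x := by
      simpa using (hasDerivAt_id x).const_mul c
    have hexp : HasDerivAt (fun s : ℂ => Complex.exp (c * s))
        (c * Complex.exp (c * x)) x := by
      simpa [mul_comm] using h1.cexp
    have hQ : HasDerivAt (fun s : ℂ => ((Lop c)^[j] Q).eval s)
        ((Polynomial.derivative ((Lop c)^[j] Q)).eval x) x :=
      Polynomial.hasDerivAt _ x
    rw [HasDerivAt.deriv (f := fun s : ℂ => ((⇑Polynomial.derivative)^[j] P).eval s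
        + Complex.exp (c * s) * ((Lop c)^[j] Q).eval s) (hP.add (hexp.mul hQ)),
      Function.iterate_succ_apply' (Lop c),
      Function.iterate_succ_apply']
    simp only [Lop, eval_add, eval_smul, smul_eq_mul]
    ring

lemma Lop_iter_natDegree_le (c : ℂ) {Q : ℂ[X]} {m : ℕ} (h : Q.natDegree ≤ m) (j : ℕ) :
    ((Lop c)^[j] Q).natDegree ≤ m := by
  induction j with
  | zero => simpa
  | succ j ih => rw [Function.iterate_succ_apply']; exact Lop_natDegree_le c ih

lemma Lop_iter_eq_zero (c : ℂ) (hc : c ≠ 0) {Q : ℂ[X]} {j : ℕ}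
    (h : (Lop c)^[j] Q = 0) : Q = 0 := by
  induction j generalizing Q with
  | zero => simpa using h
  | succ j ih =>
      rw [Function.iterate_succ_apply] at h
      exact Lop_zero c hc (ih h)

lemma Lop_iter_zero (c : ℂ) (j : ℕ) : (Lop c)^[j] (0 : ℂ[X]) = 0 := by
  induction j with
  | zero => rfl
  | succ j ih => rw [Function.iterate_succ_apply', ih]; simp [Lop]

/-- The characteristic quasipolynomial
`Δ(s) = s^n + ∑_{k=0}^{n-1} a_k s^k + e^{-sτ} ∑_{k=0}^{m} b_k s^k`
of a delay-differential equation with `n ≥ m ≥ 0` and delay `τ > 0`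
has no root of multiplicity greater than `n + m + 1`. -/
theorem no_root_of_multiplicity_gt_degree
    (n m : ℕ) (hnm : m ≤ n) (τ : ℝ) (hτ : 0 < τ) (a b : ℕ → ℝ) :
    ¬ ∃ s₀ : ℂ, ∀ j ≤ n + m + 1,
      iteratedDeriv j
        (fun s : ℂ => s ^ n + (∑ k ∈ Finset.range n, (a k : ℂ) * s ^ k)
          + Complex.exp (-s * (τ : ℂ)) * ∑ k ∈ Finset.range (m + 1), (b k : ℂ) * s ^ k)
        s₀ = 0 := by
  rintro ⟨s₀, h⟩
  set c : ℂ := -(τ : ℂ) with hcdef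
  have hc : c ≠ 0 := by
    simp [hcdef, Complex.ofReal_ne_zero, ne_of_gt hτ]
  set P : ℂ[X] := X ^ n + ∑ k ∈ Finset.range n, C ((a k : ℂ)) * X ^ k with hPdef
  set Q : ℂ[X] := ∑ k ∈ Finset.range (m + 1), C ((b k : ℂ)) * X ^ k with hQdef
  have hfun : (fun s : ℂ => s ^ n + (∑ k ∈ Finset.range n, (a k : ℂ) * s ^ k)
          + Complex.exp (-s * (τ : ℂ)) * ∑ k ∈ Finset.range (m + 1), (b k : ℂ) * s ^ k)
      = fun s : ℂ => P.eval s + Complex.exp (c * s) * Q.eval s := by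
    funext s
    have hb : -s * (τ : ℂ) = c * s := by rw [hcdef]; ring
    rw [hb, hPdef, hQdef]
    simp [eval_finset_sum]
  have h' : ∀ j ≤ n + m + 1,
      ((⇑Polynomial.derivative)^[j] P).eval s₀
        + Complex.exp (c * s₀) * ((Lop c)^[j] Q).eval s₀ = 0 := by
    intro j hj
    have := h j hj
    rw [hfun, iter_deriv_formula] at this
    simpa using this
  have hdegP : P.natDegree ≤ n := by
    rw [hPdef]
    refine (natDegree_add_le _ _).trans (max_le (natDegree_X_pow n).le ?_)
    refine natDegree_sum_le_of_forall_le _ _ fun k hk => ?_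
    exact (natDegree_C_mul_le _ _).trans (by
      rw [natDegree_X_pow]; exact (Finset.mem_range.mp hk).le)
  have hdegQ : Q.natDegree ≤ m := by
    rw [hQdef]
    refine natDegree_sum_le_of_forall_le _ _ fun k hk => ?_
    exact (natDegree_C_mul_le _ _).trans (by
      rw [natDegree_X_pow]; exact Nat.lt_succ_iff.mp (Finset.mem_range.mp hk))
  have hexp : Complex.exp (c * s₀) ≠ 0 := Complex.exp_ne_zero _
  -- Step 1: the top m+1 conditions kill Q
  have hQvanish : ∀ i ≤ m, ((Lop c)^[i] ((Lop c)^[n + 1] Q)).eval s₀ = 0 := by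
    intro i hi
    rw [← Function.iterate_add_apply]
    have hj := h' (i + (n + 1)) (by omega)
    have hPz : (⇑Polynomial.derivative)^[i + (n + 1)] P = 0 :=
      iterate_derivative_eq_zero (by omega)
    rw [hPz, eval_zero, zero_add] at hj
    exact (mul_eq_zero.mp hj).resolve_left hexp
  have hR0 : (Lop c)^[n + 1] Q = 0 :=
    poly_eq_zero_of_derivs (Lop_iter_natDegree_le c hdegQ (n + 1))
      (deriv_vanish c _ s₀ m hQvanish)
  have hQ0 : Q = 0 := Lop_iter_eq_zero c hc hR0
  -- Step 2: then P must vanish to order n+1, so P = 0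
  have hPvanish : ∀ j ≤ n, ((⇑Polynomial.derivative)^[j] P).eval s₀ = 0 := by
    intro j hj
    have hj' := h' j (by omega)
    rw [hQ0, Lop_iter_zero, eval_zero, mul_zero, add_zero] at hj'
    exact hj'
  have hP0 : P = 0 := poly_eq_zero_of_derivs hdegP hPvanish
  -- But P is monic of degree n
  have hc1 : P.coeff n = 1 := by
    rw [hPdef, coeff_add, coeff_X_pow, if_pos rfl, finset_sum_coeff]
    rw [Finset.sum_eq_zero fun k hk => by
      rw [coeff_C_mul, coeff_X_pow,
        if_neg (by have := Finset.mem_range.mp hk; omega), mul_zero]]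
    ring
  rw [hP0, coeff_zero] at hc1
  exact one_ne_zero hc1.symm
end

section
/- Let n ≥ m ≥ 0 be integers, τ > 0, s_0 ∈ ℝ, and let a_0,…,a_{n-1} be fixed real numbers. For real numbers b_0,…,b_m, define Δ(s) = s^n + Σ_{k=0}^{n-1} a_k s^k + e^{-sτ} Σ_{k=0}^{m} b_k s^k. Then there exists a unique tuple (b_0,…,b_m) ∈ ℝ^{m+1} such that Δ^{(j)}(s_0) = 0 for all j = 0, 1, …, m. -/
open Polynomial
open Polynomial

noncomputable def Dt (τ : ℝ) : ℝ[X] →ₗ[ℝ] ℝ[X] :=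
  Polynomial.derivative - τ • LinearMap.id

lemma Dt_apply (τ : ℝ) (q : ℝ[X]) : Dt τ q = derivative q - C τ * q := by
  simp [Dt, smul_eq_C_mul]

noncomputable def Gf (τ : ℝ) (p q : ℝ[X]) : ℂ → ℂ :=
  fun s => (p.map (algebraMap ℝ ℂ)).eval s
    + Complex.exp (-s * (τ : ℂ)) * ((q.map (algebraMap ℝ ℂ)).eval s)

lemma hasDerivAt_Gf (τ : ℝ) (p q : ℝ[X]) (s : ℂ) :
    HasDerivAt (Gf τ p q) (Gf τ (derivative p) (Dt τ q) s) s := by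
  have h1 : HasDerivAt (fun s : ℂ => (p.map (algebraMap ℝ ℂ)).eval s)
      ((derivative (p.map (algebraMap ℝ ℂ))).eval s) s := Polynomial.hasDerivAt _ s
  have h2 : HasDerivAt (fun s : ℂ => (q.map (algebraMap ℝ ℂ)).eval s)
      ((derivative (q.map (algebraMap ℝ ℂ))).eval s) s := Polynomial.hasDerivAt _ s
  have h3 : HasDerivAt (fun s : ℂ => -s * (τ : ℂ)) (-(τ : ℂ)) s := by
    simpa using ((hasDerivAt_id s).neg.mul_const (τ : ℂ))
  have h4 := h1.add (h3.cexp.mul h2)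
  refine h4.congr_deriv ?_
  simp only [Gf, Dt_apply, Polynomial.map_sub, Polynomial.map_mul, Polynomial.map_C,
    Polynomial.derivative_map, eval_sub, eval_mul, eval_C, Complex.coe_algebraMap]
  ring

lemma iteratedDeriv_Gf (τ : ℝ) (j : ℕ) (p q : ℝ[X]) (s : ℂ) :
    iteratedDeriv j (Gf τ p q) s = Gf τ (derivative^[j] p) ((Dt τ)^[j] q) s := by
  induction j generalizing p q with
  | zero => simp
  | succ j ih =>
    rw [iteratedDeriv_succ']
    have : deriv (Gf τ p q) = Gf τ (derivative p) (Dt τ q) := by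
      funext x; exact (hasDerivAt_Gf τ p q x).deriv
    rw [this, ih, Function.iterate_succ_apply, Function.iterate_succ_apply]

lemma Gf_real (τ : ℝ) (p q : ℝ[X]) (s₀ : ℝ) :
    Gf τ p q (s₀ : ℂ) = ((p.eval s₀ + Real.exp (-(s₀ * τ)) * q.eval s₀ : ℝ) : ℂ) := by
  have key : ∀ r : ℝ[X], (r.map (algebraMap ℝ ℂ)).eval (s₀ : ℂ) = ((r.eval s₀ : ℝ) : ℂ) := by
    intro r
    rw [eval_map]
    exact Polynomial.eval₂_at_apply (algebraMap ℝ ℂ) s₀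
  have : Complex.exp (-(s₀ : ℂ) * (τ : ℂ)) = ((Real.exp (-(s₀ * τ)) : ℝ) : ℂ) := by
    rw [Complex.ofReal_exp]; push_cast; ring_nf
  simp [Gf, key, this]

lemma iterate_derivative_add' (i : ℕ) (A B : ℝ[X]) :
    derivative^[i] (A + B) = derivative^[i] A + derivative^[i] B := by
  rw [← Module.End.pow_apply, ← Module.End.pow_apply, ← Module.End.pow_apply, map_add]

lemma vanish_of_Dt (τ s₀ : ℝ) (m : ℕ) (q : ℝ[X]) (hdeg : q.natDegree ≤ m)
    (h : ∀ j ≤ m, ((Dt τ)^[j] q).eval s₀ = 0) : q = 0 := by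
  have key : ∀ i j, i + j ≤ m → (derivative^[i] ((Dt τ)^[j] q)).eval s₀ = 0 := by
    intro i
    induction i with
    | zero => intro j hj; simpa using h j (by omega)
    | succ i ih =>
      intro j hj
      have hd : derivative ((Dt τ)^[j] q) = (Dt τ)^[j+1] q + C τ * ((Dt τ)^[j] q) := by
        rw [Function.iterate_succ_apply', Dt_apply]; ring
      rw [Function.iterate_succ_apply, hd]
      rw [iterate_derivative_add', Polynomial.iterate_derivative_C_mul, eval_add, eval_mul,
        eval_C, ih (j+1) (by omega), ih j (by omega)]
      ring
  by_contra hq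
  have hroot : ∀ i ≤ m, (derivative^[i] q).IsRoot s₀ := by
    intro i hi
    have := key i 0 (by omega)
    simpa [IsRoot] using this
  have hlt : m < q.rootMultiplicity s₀ := by
    apply Polynomial.lt_rootMultiplicity_of_isRoot_iterate_derivative_of_mem_nonZeroDivisors hq hroot
    exact mem_nonZeroDivisors_of_ne_zero (by positivity)
  have hle : q.rootMultiplicity s₀ ≤ q.natDegree :=
    Polynomial.natDegree_le_of_dvd (q.pow_rootMultiplicity_dvd s₀) hq |>.trans_eq' (by
      rw [(monic_X_sub_C s₀).natDegree_pow, natDegree_X_sub_C, mul_one])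
  omega
  

noncomputable def qpoly (m : ℕ) (b : Fin (m + 1) → ℝ) : ℝ[X] :=
  ∑ k : Fin (m + 1), C (b k) * X ^ (k : ℕ)

lemma qpoly_coeff (m : ℕ) (b : Fin (m + 1) → ℝ) (k : Fin (m + 1)) :
    (qpoly m b).coeff (k : ℕ) = b k := by
  rw [qpoly, finset_sum_coeff]
  rw [Finset.sum_eq_single k]
  · simp
  · intro i _ hik
    simp only [coeff_C_mul, coeff_X_pow, Fin.val_eq_val]
    rw [if_neg (fun h => absurd h.symm hik), mul_zero]
  · simp

lemma qpoly_natDegree_le (m : ℕ) (b : Fin (m + 1) → ℝ) : (qpoly m b).natDegree ≤ m := by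
  apply Polynomial.natDegree_sum_le_of_forall_le
  intro k _
  exact (Polynomial.natDegree_C_mul_X_pow_le (b k) (k : ℕ)).trans (by omega)

lemma qpoly_add (m : ℕ) (b c : Fin (m + 1) → ℝ) :
    qpoly m (b + c) = qpoly m b + qpoly m c := by
  simp [qpoly, add_mul, C_add, Finset.sum_add_distrib]

lemma qpoly_smul (m : ℕ) (r : ℝ) (b : Fin (m + 1) → ℝ) :
    qpoly m (r • b) = r • qpoly m b := by
  simp [qpoly, Finset.smul_sum, smul_eq_C_mul, C_mul, mul_assoc]

noncomputable def Lmap (τ s₀ : ℝ) (m : ℕ) : (Fin (m + 1) → ℝ) →ₗ[ℝ] (Fin (m + 1) → ℝ) where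
  toFun b := fun j => ((Dt τ)^[(j : ℕ)] (qpoly m b)).eval s₀
  map_add' b c := by
    funext j
    simp only [← Module.End.pow_apply, qpoly_add, map_add, eval_add, Pi.add_apply]
  map_smul' r b := by
    funext j
    simp only [← Module.End.pow_apply, qpoly_smul, map_smul]
    simp only [smul_eq_C_mul, eval_mul, eval_C, RingHom.id_apply, Pi.smul_apply, smul_eq_mul]


lemma Lmap_injective (τ s₀ : ℝ) (m : ℕ) : Function.Injective (Lmap τ s₀ m) := by
  rw [← LinearMap.ker_eq_bot]
  rw [LinearMap.ker_eq_bot']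
  intro b hb
  have hq : qpoly m b = 0 := by
    apply vanish_of_Dt τ s₀ m _ (qpoly_natDegree_le m b)
    intro j hj
    have := congrFun hb ⟨j, by omega⟩
    simpa [Lmap] using this
  funext k
  have := qpoly_coeff m b k
  rw [hq] at this
  simpa using this.symm

lemma Lmap_surjective (τ s₀ : ℝ) (m : ℕ) : Function.Surjective (Lmap τ s₀ m) :=
  LinearMap.injective_iff_surjective.mp (Lmap_injective τ s₀ m)

/-- Given `n ≥ m ≥ 0`, a delay `τ > 0`, a real point `s₀` and fixed real
coefficients `a_0, …, a_{n-1}`, there is a unique tuple `(b_0, …, b_m)` of real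
coefficients such that the quasipolynomial
`Δ(s) = s^n + ∑_{k=0}^{n-1} a_k s^k + e^{-sτ} ∑_{k=0}^{m} b_k s^k`
satisfies `Δ^{(j)}(s₀) = 0` for all `j = 0, 1, …, m`. -/
theorem existsUnique_b_root_multiplicity_succ_m
    (n m : ℕ) (hnm : m ≤ n) (τ : ℝ) (hτ : 0 < τ) (s₀ : ℝ) (a : ℕ → ℝ) :
    ∃! b : Fin (m + 1) → ℝ, ∀ j ≤ m,
      iteratedDeriv j
        (fun s : ℂ => s ^ n + (∑ k ∈ Finset.range n, (a k : ℂ) * s ^ k)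
          + Complex.exp (-s * (τ : ℂ)) * ∑ k : Fin (m + 1), (b k : ℂ) * s ^ (k : ℕ))
        (s₀ : ℂ) = 0 := by
  set P : ℝ[X] := X ^ n + ∑ k ∈ Finset.range n, C (a k) * X ^ k with hP
  have hfun : ∀ b : Fin (m + 1) → ℝ,
      (fun s : ℂ => s ^ n + (∑ k ∈ Finset.range n, (a k : ℂ) * s ^ k)
          + Complex.exp (-s * (τ : ℂ)) * ∑ k : Fin (m + 1), (b k : ℂ) * s ^ (k : ℕ))
        = Gf τ P (qpoly m b) := by
    intro b
    funext s
    simp [Gf, qpoly, hP, Polynomial.map_add, Polynomial.map_pow, Polynomial.map_sum,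
      Polynomial.map_mul, Polynomial.map_C, eval_add, eval_pow, eval_X, eval_finset_sum,
      eval_mul, eval_C, Complex.coe_algebraMap]
  have key : ∀ (b : Fin (m + 1) → ℝ) (j : ℕ),
      iteratedDeriv j
        (fun s : ℂ => s ^ n + (∑ k ∈ Finset.range n, (a k : ℂ) * s ^ k)
          + Complex.exp (-s * (τ : ℂ)) * ∑ k : Fin (m + 1), (b k : ℂ) * s ^ (k : ℕ))
        (s₀ : ℂ)
      = (((derivative^[j] P).eval s₀
          + Real.exp (-(s₀ * τ)) * (((Dt τ)^[j] (qpoly m b)).eval s₀) : ℝ) : ℂ) := by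
    intro b j
    rw [hfun b, iteratedDeriv_Gf, Gf_real]
  have hE : Real.exp (-(s₀ * τ)) ≠ 0 := Real.exp_ne_zero _
  set v : Fin (m + 1) → ℝ :=
    fun j => -((derivative^[(j : ℕ)] P).eval s₀) / Real.exp (-(s₀ * τ)) with hv
  have hiff : ∀ b : Fin (m + 1) → ℝ,
      (∀ j ≤ m,
        iteratedDeriv j
          (fun s : ℂ => s ^ n + (∑ k ∈ Finset.range n, (a k : ℂ) * s ^ k)
            + Complex.exp (-s * (τ : ℂ)) * ∑ k : Fin (m + 1), (b k : ℂ) * s ^ (k : ℕ))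
          (s₀ : ℂ) = 0) ↔ Lmap τ s₀ m b = v := by
    intro b
    constructor
    · intro hb
      funext j
      have h1 := hb (j : ℕ) (Nat.lt_succ_iff.mp j.isLt)
      rw [key] at h1
      have h0 : (derivative^[(j : ℕ)] P).eval s₀
          + Real.exp (-(s₀ * τ)) * (((Dt τ)^[(j : ℕ)] (qpoly m b)).eval s₀) = 0 := by
        exact_mod_cast h1
      show ((Dt τ)^[(j : ℕ)] (qpoly m b)).eval s₀ = v j
      rw [hv]
      field_simp
      linarith
    · intro hb j hj
      rw [key]
      have h1 := congrFun hb ⟨j, by omega⟩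
      have h2 : ((Dt τ)^[j] (qpoly m b)).eval s₀
          = -((derivative^[j] P).eval s₀) / Real.exp (-(s₀ * τ)) := h1
      rw [h2]
      rw [Complex.ofReal_eq_zero]
      field_simp
      ring
  obtain ⟨b, hbeq⟩ := Lmap_surjective τ s₀ m v
  exact ⟨b, (hiff b).mpr hbeq, fun c hc => Lmap_injective τ s₀ m (((hiff c).mp hc).trans hbeq.symm)⟩
end

section
/- Let n ≥ m ≥ 0 be integers, τ > 0, and s_0 ∈ ℝ. Then there exists a unique tuple (a_0,…,a_{n-1}, b_0,…,b_m) ∈ ℝ^{n+m+1} such that the function Δ(s) = s^n + Σ_{k=0}^{n-1} a_k s^k + e^{-sτ} Σ_{k=0}^{m} b_k s^k satisfies Δ^{(j)}(s_0) = 0 for all j = 0, 1, …, n + m, i.e., such that s_0 is a root of Δ of the maximal multiplicity n + m + 1. -/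
open Polynomial Complex Asymptotics Filter

noncomputable section QPaux

/-- differentiability of the quasipolynomial -/
lemma diff_qp (P Q : ℂ[X]) (τ : ℂ) :
    Differentiable ℂ (fun s : ℂ => P.eval s + Complex.exp (-s * τ) * Q.eval s) :=
  (P.differentiable).add
    ((Complex.differentiable_exp.comp ((differentiable_id.neg).mul_const τ)).mul Q.differentiable)

lemma itd_add {f g : ℂ → ℂ} (hf : Differentiable ℂ f) (hg : Differentiable ℂ g) (j : ℕ) (x : ℂ) :
    iteratedDeriv j (fun s => f s + g s) x = iteratedDeriv j f x + iteratedDeriv j g x := by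
  rw [← iteratedDerivWithin_univ, ← iteratedDerivWithin_univ, ← iteratedDerivWithin_univ]
  exact iteratedDerivWithin_add (Set.mem_univ x) uniqueDiffOn_univ
    hf.contDiff.contDiffWithinAt hg.contDiff.contDiffWithinAt

lemma itd_const_mul {f : ℂ → ℂ} (hf : Differentiable ℂ f) (c : ℂ) (j : ℕ) (x : ℂ) :
    iteratedDeriv j (fun s => c * f s) x = c * iteratedDeriv j f x := by
  rw [← iteratedDerivWithin_univ, ← iteratedDerivWithin_univ]
  exact iteratedDerivWithin_const_mul (Set.mem_univ x) uniqueDiffOn_univ c hf.contDiff.contDiffWithinAt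

lemma itd_poly (j : ℕ) (P : ℂ[X]) :
    iteratedDeriv j (fun s : ℂ => P.eval s) = fun s => (Polynomial.derivative^[j] P).eval s := by
  induction j generalizing P with
  | zero => simp
  | succ j ih =>
    rw [iteratedDeriv_succ']
    have h : deriv (fun s : ℂ => P.eval s) = fun s => (Polynomial.derivative P).eval s :=
      funext fun _ => P.deriv
    rw [h, ih, Function.iterate_succ_apply]

lemma deriv_qp (P Q : ℂ[X]) (τ : ℂ) :
    deriv (fun s : ℂ => P.eval s + Complex.exp (-s * τ) * Q.eval s)
      = fun s : ℂ => (Polynomial.derivative P).eval s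
          + Complex.exp (-s * τ) * (Polynomial.derivative Q - Polynomial.C τ * Q).eval s := by
  funext s
  have h1 : HasDerivAt (fun s : ℂ => P.eval s) ((Polynomial.derivative P).eval s) s :=
    P.hasDerivAt s
  have hl : HasDerivAt (fun s : ℂ => -s * τ) (-τ) s := by
    simpa using ((hasDerivAt_id s).neg.mul_const τ)
  have he : HasDerivAt (fun s : ℂ => Complex.exp (-s * τ)) (Complex.exp (-s * τ) * -τ) s :=
    (Complex.hasDerivAt_exp (-s * τ)).comp s hl
  have h2 := he.mul (Q.hasDerivAt s)
  have h3 := h1.add h2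
  rw [HasDerivAt.deriv (f := fun s : ℂ => P.eval s + Complex.exp (-s * τ) * Q.eval s) h3]
  simp only [Polynomial.eval_sub, Polynomial.eval_mul, Polynomial.eval_C]
  ring

end QPaux

noncomputable section QPaux2

lemma tauP_eq_zero {τ : ℂ} (hτ : τ ≠ 0) {P : ℂ[X]}
    (h : Polynomial.derivative P + Polynomial.C τ * P = 0) : P = 0 := by
  by_contra hP
  have hd : (Polynomial.derivative P).coeff P.natDegree = 0 := by
    rw [Polynomial.coeff_derivative, Polynomial.coeff_natDegree_succ_eq_zero, zero_mul]
  have h2 := congrArg (fun p : ℂ[X] => p.coeff P.natDegree) h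
  simp only [Polynomial.coeff_add, Polynomial.coeff_C_mul, Polynomial.coeff_zero, hd,
    zero_add] at h2
  exact hP (Polynomial.leadingCoeff_eq_zero.mp (by
    rcases mul_eq_zero.mp h2 with h | h
    · exact absurd h hτ
    · exact h))

/-- A polynomial of degree < n' all of whose derivatives of order < n' vanish at s₀ is zero. -/
lemma poly_vanish {n' : ℕ} {P : ℂ[X]} {s₀ : ℂ} (hdeg : P.degree < (n' : ℕ))
    (h : ∀ j < n', (Polynomial.derivative^[j] P).eval s₀ = 0) : P = 0 := by
  by_contra h0
  rcases n' with _ | n''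
  · rw [Polynomial.degree_eq_natDegree h0] at hdeg
    have : P.natDegree < 0 := by exact_mod_cast hdeg
    omega
  · have hroot : ∀ k ≤ n'', (Polynomial.derivative^[k] P).IsRoot s₀ := fun k hk =>
      h k (by omega)
    have hlt :=
      Polynomial.lt_rootMultiplicity_of_isRoot_iterate_derivative_of_mem_nonZeroDivisors h0 hroot
        (mem_nonZeroDivisors_of_ne_zero (by exact_mod_cast Nat.factorial_ne_zero n''))
    have hdvd := Polynomial.pow_rootMultiplicity_dvd P s₀
    have hle := Polynomial.natDegree_le_of_dvd hdvd h0
    rw [Polynomial.natDegree_pow, Polynomial.natDegree_X_sub_C, mul_one] at hle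
    have hnd : P.natDegree < n'' + 1 := by
      have := (Polynomial.degree_eq_natDegree h0) ▸ hdeg
      exact_mod_cast this
    omega

lemma keyK {τ : ℂ} (hτ : τ ≠ 0) (s₀ : ℂ) :
    ∀ (m' n' : ℕ) (P Q : ℂ[X]), P.degree < (n' : ℕ) → Q.degree < (m' : ℕ) →
      (∀ j < n' + m',
        iteratedDeriv j (fun s : ℂ => P.eval s + Complex.exp (-s * τ) * Q.eval s) s₀ = 0) →
      P = 0 ∧ Q = 0 := by
  intro m'
  induction m' with
  | zero =>
    intro n' P Q hP hQ hj
    have hQ0 : Q = 0 := by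
      refine Polynomial.degree_eq_bot.mp ?_
      simpa using hQ
    subst hQ0
    have hv : ∀ j < n', (Polynomial.derivative^[j] P).eval s₀ = 0 := by
      intro j hjlt
      have := hj j (by omega)
      rw [show (fun s : ℂ => P.eval s + Complex.exp (-s * τ) * Polynomial.eval s (0 : ℂ[X]))
          = fun s : ℂ => P.eval s from funext fun s => by simp] at this
      rw [itd_poly] at this
      exact this
    exact ⟨poly_vanish hP hv, rfl⟩
  | succ m' ih =>
    intro n' P Q hP hQ hj
    set f := fun s : ℂ => P.eval s + Complex.exp (-s * τ) * Q.eval s with hfdef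
    have hdiff : Differentiable ℂ f := diff_qp P Q τ
    have hderiv : deriv f = fun s : ℂ => (Polynomial.derivative P).eval s
        + Complex.exp (-s * τ) * (Polynomial.derivative Q - Polynomial.C τ * Q).eval s :=
      deriv_qp P Q τ
    have hdderiv : Differentiable ℂ (deriv f) := hderiv ▸ diff_qp _ _ τ
    have hg : ∀ j < n' + m',
        iteratedDeriv j (fun s : ℂ => (Polynomial.derivative P + Polynomial.C τ * P).eval s
          + Complex.exp (-s * τ) * (Polynomial.derivative Q).eval s) s₀ = 0 := by
      intro j hjlt
      have hfun : (fun s : ℂ => (Polynomial.derivative P + Polynomial.C τ * P).eval s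
          + Complex.exp (-s * τ) * (Polynomial.derivative Q).eval s)
          = fun s : ℂ => deriv f s + τ * f s := by
        funext s
        rw [hderiv]
        simp only [hfdef, Polynomial.eval_add, Polynomial.eval_sub, Polynomial.eval_mul,
          Polynomial.eval_C]
        ring
      rw [hfun, itd_add hdderiv (hdiff.const_mul τ) j s₀,
        itd_const_mul hdiff τ j s₀, ← iteratedDeriv_succ', hj (j + 1) (by omega),
        hj j (by omega), mul_zero, add_zero]
    have hdQ : (Polynomial.derivative Q).degree < (m' : ℕ) := by
      rcases eq_or_ne Q 0 with rfl | hQne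
      · have hz : (Polynomial.derivative (0 : ℂ[X])).degree = ⊥ := by simp
        rw [hz]; exact WithBot.bot_lt_coe _
      · have h1 : Q.degree ≤ (m' : ℕ) := by
          have := (Polynomial.degree_eq_natDegree hQne) ▸ hQ
          have h2 : Q.natDegree < m' + 1 := by exact_mod_cast this
          rw [Polynomial.degree_eq_natDegree hQne]
          exact_mod_cast Nat.lt_succ_iff.mp h2
        exact lt_of_lt_of_le (Polynomial.degree_derivative_lt hQne) h1
    have hdP2 : (Polynomial.derivative P + Polynomial.C τ * P).degree < (n' : ℕ) := by
      refine lt_of_le_of_lt (Polynomial.degree_add_le _ _) (max_lt ?_ ?_)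
      · exact lt_of_le_of_lt (Polynomial.degree_derivative_le) hP
      · refine lt_of_le_of_lt ?_ hP
        calc (Polynomial.C τ * P).degree ≤ (Polynomial.C τ).degree + P.degree :=
              Polynomial.degree_mul_le _ _
          _ ≤ 0 + P.degree := add_le_add (Polynomial.degree_C_le) le_rfl
          _ = P.degree := by rw [zero_add]
    obtain ⟨hP2, hQ2⟩ := ih n' _ _ hdP2 hdQ hg
    have hPz : P = 0 := tauP_eq_zero hτ hP2
    have hQc : Q = Polynomial.C (Q.coeff 0) := Polynomial.eq_C_of_derivative_eq_zero hQ2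
    have h0 := hj 0 (by omega)
    rw [iteratedDeriv_zero] at h0
    rw [hfdef] at h0
    simp only [hPz, Polynomial.eval_zero, zero_add] at h0
    have hQ0 : Q.eval s₀ = 0 :=
      (mul_eq_zero.mp h0).resolve_left (Complex.exp_ne_zero _)
    refine ⟨hPz, ?_⟩
    rw [hQc] at hQ0 ⊢
    simpa using hQ0

noncomputable section QPaux3

variable (n m : ℕ) (τ s₀ : ℂ)

/-- The coefficient-dependent part of the quasipolynomial. -/
def FcAux (ab : (Fin n → ℂ) × (Fin (m + 1) → ℂ)) : ℂ → ℂ :=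
  fun s => (∑ k : Fin n, ab.1 k * s ^ (k : ℕ))
    + Complex.exp (-s * τ) * ∑ k : Fin (m + 1), ab.2 k * s ^ (k : ℕ)

def Pa (a : Fin n → ℂ) : ℂ[X] := ∑ k : Fin n, Polynomial.C (a k) * Polynomial.X ^ (k : ℕ)

lemma Pa_eval (a : Fin n → ℂ) (s : ℂ) : (Pa n a).eval s = ∑ k : Fin n, a k * s ^ (k : ℕ) := by
  simp [Pa, Polynomial.eval_finset_sum]

lemma Pa_degree (a : Fin n → ℂ) : (Pa n a).degree < (n : ℕ) := by
  refine lt_of_le_of_lt (Polynomial.degree_sum_le _ _) ?_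
  rw [Finset.sup_lt_iff (by exact WithBot.bot_lt_coe _)]
  intro k _
  exact lt_of_le_of_lt (Polynomial.degree_C_mul_X_pow_le _ _) (by exact_mod_cast k.isLt)

lemma Pa_coeff (a : Fin n → ℂ) (k : Fin n) : (Pa n a).coeff (k : ℕ) = a k := by
  rw [Pa, Polynomial.finset_sum_coeff]
  rw [Finset.sum_eq_single k]
  · simp
  · intro i _ hik
    simp [Polynomial.coeff_C_mul, Polynomial.coeff_X_pow, Fin.val_eq_val, Ne.symm hik]
  · intro h; exact absurd (Finset.mem_univ k) h

lemma FcAux_eq (ab : (Fin n → ℂ) × (Fin (m + 1) → ℂ)) :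
    FcAux n m τ ab = fun s => (Pa n ab.1).eval s + Complex.exp (-s * τ) * (Pa (m+1) ab.2).eval s := by
  funext s
  rw [FcAux, Pa_eval, Pa_eval]

lemma diff_FcAux (ab : (Fin n → ℂ) × (Fin (m + 1) → ℂ)) :
    Differentiable ℂ (FcAux n m τ ab) := by
  rw [FcAux_eq]
  exact diff_qp _ _ τ

/-- The linear map sending coefficients to the first `n+m+1` derivatives at `s₀`. -/
def Phi : ((Fin n → ℂ) × (Fin (m + 1) → ℂ)) →ₗ[ℂ] (Fin (n + m + 1) → ℂ) where
  toFun ab := fun j => iteratedDeriv (j : ℕ) (FcAux n m τ ab) s₀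
  map_add' x y := by
    funext j
    show iteratedDeriv (j : ℕ) (FcAux n m τ (x + y)) s₀
      = iteratedDeriv (j : ℕ) (FcAux n m τ x) s₀ + iteratedDeriv (j : ℕ) (FcAux n m τ y) s₀
    have h : FcAux n m τ (x + y) = fun s => FcAux n m τ x s + FcAux n m τ y s := by
      funext s
      simp only [FcAux, Prod.fst_add, Prod.snd_add, Pi.add_apply, add_mul,
        Finset.sum_add_distrib, mul_add]
      ring
    rw [h]
    exact itd_add (diff_FcAux n m τ x) (diff_FcAux n m τ y) (j : ℕ) s₀
  map_smul' c x := by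
    funext j
    show iteratedDeriv (j : ℕ) (FcAux n m τ (c • x)) s₀ = c * iteratedDeriv (j : ℕ) (FcAux n m τ x) s₀
    have h : FcAux n m τ (c • x) = fun s => c * FcAux n m τ x s := by
      funext s
      simp only [FcAux, Prod.smul_fst, Prod.smul_snd, Pi.smul_apply, smul_eq_mul, mul_add,
        Finset.mul_sum]
      refine congrArg₂ (· + ·) ?_ ?_ <;> exact Finset.sum_congr rfl fun i _ => by ring
    rw [h]
    exact itd_const_mul (diff_FcAux n m τ x) c (j : ℕ) s₀

lemma Phi_injective (hτ : τ ≠ 0) : Function.Injective (Phi n m τ s₀) := by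
  rw [← LinearMap.ker_eq_bot, LinearMap.ker_eq_bot']
  intro ab hab
  have hcond : ∀ j < n + (m + 1),
      iteratedDeriv j (fun s : ℂ => (Pa n ab.1).eval s
        + Complex.exp (-s * τ) * (Pa (m+1) ab.2).eval s) s₀ = 0 := by
    intro j hj
    have := congrFun hab (⟨j, by omega⟩ : Fin (n + m + 1))
    rw [← FcAux_eq]
    exact this
  obtain ⟨h1, h2⟩ := keyK hτ s₀ (m + 1) n _ _ (Pa_degree n ab.1) (Pa_degree (m+1) ab.2) hcond
  have e1 : ab.1 = 0 := funext fun k => by rw [← Pa_coeff n ab.1 k, h1]; simp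
  have e2 : ab.2 = 0 := funext fun k => by rw [← Pa_coeff (m+1) ab.2 k, h2]; simp
  exact Prod.ext e1 e2

lemma Phi_surjective (hτ : τ ≠ 0) : Function.Surjective (Phi n m τ s₀) := by
  refine (LinearMap.injective_iff_surjective_of_finrank_eq_finrank ?_).mp
    (Phi_injective n m τ s₀ hτ)
  simp only [Module.finrank_prod, Module.finrank_pi, Fintype.card_fin]
  omega

end QPaux3

noncomputable section QPaux4

lemma hasDerivAt_conj_conj {f : ℂ → ℂ} {f' : ℂ} {z : ℂ}
    (hf : HasDerivAt f f' ((starRingEnd ℂ) z)) :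
    HasDerivAt (fun s => (starRingEnd ℂ) (f ((starRingEnd ℂ) s))) ((starRingEnd ℂ) f') z := by
  rw [hasDerivAt_iff_isLittleO] at hf ⊢
  have hc : Filter.Tendsto (fun s : ℂ => (starRingEnd ℂ) s) (nhds z)
      (nhds ((starRingEnd ℂ) z)) := (Complex.continuous_conj).tendsto z
  have h2 := hf.comp_tendsto hc
  rw [isLittleO_iff] at h2 ⊢
  intro c hc'
  filter_upwards [h2 hc'] with s hs
  have heq : (starRingEnd ℂ) (f ((starRingEnd ℂ) s)) - (starRingEnd ℂ) (f ((starRingEnd ℂ) z))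
        - (s - z) • (starRingEnd ℂ) f'
      = (starRingEnd ℂ) (f ((starRingEnd ℂ) s) - f ((starRingEnd ℂ) z)
        - ((starRingEnd ℂ) s - (starRingEnd ℂ) z) • f') := by
    simp only [map_sub, map_mul, smul_eq_mul, Complex.conj_conj]
  rw [heq, RCLike.norm_conj]
  have hnorm : ‖s - z‖ = ‖(starRingEnd ℂ) s - (starRingEnd ℂ) z‖ := by
    rw [← map_sub, RCLike.norm_conj]
  rw [hnorm]
  simpa using hs

lemma iteratedDeriv_conj_conj (j : ℕ) :
    ∀ (f : ℂ → ℂ), Differentiable ℂ f → ∀ z : ℂ,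
      iteratedDeriv j (fun s => (starRingEnd ℂ) (f ((starRingEnd ℂ) s))) z
        = (starRingEnd ℂ) (iteratedDeriv j f ((starRingEnd ℂ) z)) := by
  induction j with
  | zero => intro f hf z; simp
  | succ j ih =>
    intro f hf z
    have hdf : Differentiable ℂ (deriv f) :=
      ((contDiff_infty_iff_deriv.mp hf.contDiff).2).differentiable (by simp)
    have hder : deriv (fun s => (starRingEnd ℂ) (f ((starRingEnd ℂ) s)))
        = fun s => (starRingEnd ℂ) ((deriv f) ((starRingEnd ℂ) s)) :=
      funext fun w => (hasDerivAt_conj_conj ((hf _).hasDerivAt)).deriv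
    rw [iteratedDeriv_succ', iteratedDeriv_succ', hder]
    exact ih (deriv f) hdf z

end QPaux4

noncomputable section QPaux5

variable (n m : ℕ) (τ s₀ : ℂ)

def BigFun (ab : (Fin n → ℂ) × (Fin (m + 1) → ℂ)) : ℂ → ℂ :=
  fun s : ℂ => s ^ n + (∑ k : Fin n, ab.1 k * s ^ (k : ℕ))
    + Complex.exp (-s * τ) * ∑ k : Fin (m + 1), ab.2 k * s ^ (k : ℕ)

def CondC (ab : (Fin n → ℂ) × (Fin (m + 1) → ℂ)) : Prop :=
  ∀ j ≤ n + m, iteratedDeriv j (BigFun n m τ ab) s₀ = 0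

lemma BigFun_eq (ab : (Fin n → ℂ) × (Fin (m + 1) → ℂ)) :
    BigFun n m τ ab = fun s => s ^ n + FcAux n m τ ab s := by
  funext s
  simp only [BigFun, FcAux]
  ring

lemma diff_BigFun (ab : (Fin n → ℂ) × (Fin (m + 1) → ℂ)) :
    Differentiable ℂ (BigFun n m τ ab) := by
  rw [BigFun_eq]
  exact (differentiable_pow n).add (diff_FcAux n m τ ab)

lemma itd_big (ab : (Fin n → ℂ) × (Fin (m + 1) → ℂ)) (j : ℕ) :
    iteratedDeriv j (BigFun n m τ ab) s₀
      = iteratedDeriv j (fun s : ℂ => s ^ n) s₀ + iteratedDeriv j (FcAux n m τ ab) s₀ := by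
  rw [BigFun_eq]
  exact itd_add (differentiable_pow n) (diff_FcAux n m τ ab) j s₀

def tvec : Fin (n + m + 1) → ℂ := fun j => -(iteratedDeriv (j : ℕ) (fun s : ℂ => s ^ n) s₀)

lemma Phi_apply (ab : (Fin n → ℂ) × (Fin (m + 1) → ℂ)) (j : Fin (n + m + 1)) :
    Phi n m τ s₀ ab j = iteratedDeriv (j : ℕ) (FcAux n m τ ab) s₀ := rfl

lemma condC_iff (ab : (Fin n → ℂ) × (Fin (m + 1) → ℂ)) :
    CondC n m τ s₀ ab ↔ Phi n m τ s₀ ab = tvec n m s₀ := by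
  constructor
  · intro h
    funext j
    have h2 := h (j : ℕ) (Nat.lt_succ_iff.mp (by have := j.isLt; omega))
    rw [itd_big] at h2
    rw [Phi_apply, tvec]
    linear_combination h2
  · intro h j hj
    rw [itd_big]
    have h2 := congrFun h (⟨j, by omega⟩ : Fin (n + m + 1))
    rw [Phi_apply, tvec] at h2
    rw [h2]
    ring

lemma condC_existsUnique (hτ : τ ≠ 0) : ∃! ab, CondC n m τ s₀ ab := by
  obtain ⟨ab, hab⟩ := Phi_surjective n m τ s₀ hτ (tvec n m s₀)
  exact ⟨ab, (condC_iff n m τ s₀ ab).mpr hab, fun y hy =>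
    Phi_injective n m τ s₀ hτ (((condC_iff n m τ s₀ y).mp hy).trans hab.symm)⟩

def conjT (ab : (Fin n → ℂ) × (Fin (m + 1) → ℂ)) : (Fin n → ℂ) × (Fin (m + 1) → ℂ) :=
  (fun k => (starRingEnd ℂ) (ab.1 k), fun k => (starRingEnd ℂ) (ab.2 k))

lemma condC_conj {n m : ℕ} (τ s₀ : ℝ) (ab : (Fin n → ℂ) × (Fin (m + 1) → ℂ))
    (h : CondC n m (τ : ℂ) (s₀ : ℂ) ab) : CondC n m (τ : ℂ) (s₀ : ℂ) (conjT n m ab) := by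
  intro j hj
  have hfun : BigFun n m (τ : ℂ) (conjT n m ab)
      = fun s => (starRingEnd ℂ) (BigFun n m (τ : ℂ) ab ((starRingEnd ℂ) s)) := by
    funext s
    simp only [BigFun, conjT, map_add, map_mul, map_sum, map_pow, map_neg,
      ← Complex.exp_conj, Complex.conj_conj, Complex.conj_ofReal]
  rw [hfun, iteratedDeriv_conj_conj j _ (diff_BigFun n m (τ : ℂ) ab), Complex.conj_ofReal,
    h j hj, map_zero]

end QPaux5
/-- Given `n ≥ m ≥ 0`, a delay `τ > 0`, and a real point `s₀`, there exists a
unique tuple `(a_0, …, a_{n-1}, b_0, …, b_m)` of real coefficients such that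
`Δ(s) = s^n + ∑_{k=0}^{n-1} a_k s^k + e^{-sτ} ∑_{k=0}^{m} b_k s^k`
satisfies `Δ^{(j)}(s₀) = 0` for all `j = 0, 1, …, n + m`, i.e. such that `s₀`
is a root of `Δ` of the maximal multiplicity `n + m + 1`. -/
theorem existsUnique_coeffs_maximal_multiplicity
    (n m : ℕ) (hnm : m ≤ n) (τ : ℝ) (hτ : 0 < τ) (s₀ : ℝ) :
    ∃! ab : (Fin n → ℝ) × (Fin (m + 1) → ℝ), ∀ j ≤ n + m,
      iteratedDeriv j
        (fun s : ℂ => s ^ n + (∑ k : Fin n, (ab.1 k : ℂ) * s ^ (k : ℕ))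
          + Complex.exp (-s * (τ : ℂ)) * ∑ k : Fin (m + 1), (ab.2 k : ℂ) * s ^ (k : ℕ))
        (s₀ : ℂ) = 0 := by
  have hτc : (τ : ℂ) ≠ 0 := by
    exact_mod_cast hτ.ne'
  have key : ∀ ab : (Fin n → ℝ) × (Fin (m + 1) → ℝ),
      (∀ j ≤ n + m, iteratedDeriv j
        (fun s : ℂ => s ^ n + (∑ k : Fin n, (ab.1 k : ℂ) * s ^ (k : ℕ))
          + Complex.exp (-s * (τ : ℂ)) * ∑ k : Fin (m + 1), (ab.2 k : ℂ) * s ^ (k : ℕ))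
        (s₀ : ℂ) = 0)
      ↔ CondC n m (τ : ℂ) (s₀ : ℂ) (fun k => (ab.1 k : ℂ), fun k => (ab.2 k : ℂ)) := by
    intro ab
    exact Iff.rfl
  obtain ⟨x, hx, hxu⟩ := condC_existsUnique n m (τ : ℂ) (s₀ : ℂ) hτc
  have hconj : conjT n m x = x := hxu _ (condC_conj τ s₀ x hx)
  set r : (Fin n → ℝ) × (Fin (m + 1) → ℝ) :=
    (fun k => (x.1 k).re, fun k => (x.2 k).re) with hr
  have hr1 : ∀ k, ((r.1 k : ℝ) : ℂ) = x.1 k := fun k =>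
    Complex.conj_eq_iff_re.mp (congrFun (congrArg Prod.fst hconj) k)
  have hr2 : ∀ k, ((r.2 k : ℝ) : ℂ) = x.2 k := fun k =>
    Complex.conj_eq_iff_re.mp (congrFun (congrArg Prod.snd hconj) k)
  have hrx : ((fun k => (r.1 k : ℂ), fun k => (r.2 k : ℂ)) :
      (Fin n → ℂ) × (Fin (m + 1) → ℂ)) = x := Prod.ext (funext hr1) (funext hr2)
  refine ⟨r, (key r).mpr (hrx ▸ hx), fun y hy => ?_⟩
  have hyx : ((fun k => (y.1 k : ℂ), fun k => (y.2 k : ℂ)) :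
      (Fin n → ℂ) × (Fin (m + 1) → ℂ)) = x := hxu _ ((key y).mp hy)
  have h1 : ∀ k, (y.1 k : ℂ) = (r.1 k : ℂ) := fun k => by
    rw [hr1 k, ← hyx]
  have h2 : ∀ k, (y.2 k : ℂ) = (r.2 k : ℂ) := fun k => by
    rw [hr2 k, ← hyx]
  exact Prod.ext (funext fun k => Complex.ofReal_inj.mp (h1 k))
    (funext fun k => Complex.ofReal_inj.mp (h2 k))
end QPaux2
end

section
/- Let τ > 0 and s_0 ∈ ℝ. There exist real numbers α and β such that s_0 is a root of multiplicity at least 3 of Δ(s) = s² + 1 + (β + α s) e^{-sτ} (i.e., Δ(s_0) = Δ'(s_0) = Δ''(s_0) = 0) if and only if τ²(s_0² + 1) + 4τ s_0 + 2 = 0. -/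
lemma osc_hd1 (α β τ : ℂ) (s : ℂ) :
    HasDerivAt (fun s : ℂ => s ^ 2 + 1 + (β + α * s) * Complex.exp (-s * τ))
      (2 * s + (α - τ * (β + α * s)) * Complex.exp (-s * τ)) s := by
  have he : HasDerivAt (fun s : ℂ => Complex.exp (-s * τ)) (-τ * Complex.exp (-s * τ)) s := by
    have h : HasDerivAt (fun s : ℂ => -s * τ) (-τ) s := by
      simpa using ((hasDerivAt_id s).neg.mul_const τ)
    simpa [mul_comm, Function.comp_def] using (Complex.hasDerivAt_exp (-s * τ)).comp s h
  have h1 : HasDerivAt (fun s : ℂ => s ^ 2 + 1) (2 * s) s := by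
    simpa using ((hasDerivAt_pow 2 s).add_const 1)
  have h2 : HasDerivAt (fun s : ℂ => β + α * s) α s := by
    simpa using (((hasDerivAt_id s).const_mul α).const_add β)
  have : HasDerivAt (fun s : ℂ => s ^ 2 + 1 + (β + α * s) * Complex.exp (-s * τ)) _ s :=
    h1.add (h2.mul he)
  convert this using 1
  ring

lemma osc_hd2 (α β τ : ℂ) (s : ℂ) :
    HasDerivAt (fun s : ℂ => 2 * s + (α - τ * (β + α * s)) * Complex.exp (-s * τ))
      (2 + (τ ^ 2 * (β + α * s) - 2 * α * τ) * Complex.exp (-s * τ)) s := by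
  have he : HasDerivAt (fun s : ℂ => Complex.exp (-s * τ)) (-τ * Complex.exp (-s * τ)) s := by
    have h : HasDerivAt (fun s : ℂ => -s * τ) (-τ) s := by
      simpa using ((hasDerivAt_id s).neg.mul_const τ)
    simpa [mul_comm, Function.comp_def] using (Complex.hasDerivAt_exp (-s * τ)).comp s h
  have h1 : HasDerivAt (fun s : ℂ => 2 * s) (2 : ℂ) s := by
    simpa using ((hasDerivAt_id s).const_mul (2 : ℂ))
  have h2 : HasDerivAt (fun s : ℂ => α - τ * (β + α * s)) (-(τ * α)) s := by
    have := (((hasDerivAt_id s).const_mul α).const_add β).const_mul τ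
    simpa using (this.const_sub α)
  have : HasDerivAt (fun s : ℂ => 2 * s + (α - τ * (β + α * s)) * Complex.exp (-s * τ)) _ s :=
    h1.add (h2.mul he)
  convert this using 1
  ring

lemma osc_derivs (α β τ : ℂ) (s₀ : ℂ) :
    iteratedDeriv 0 (fun s : ℂ => s ^ 2 + 1 + (β + α * s) * Complex.exp (-s * τ)) s₀
      = s₀ ^ 2 + 1 + (β + α * s₀) * Complex.exp (-s₀ * τ) ∧
    iteratedDeriv 1 (fun s : ℂ => s ^ 2 + 1 + (β + α * s) * Complex.exp (-s * τ)) s₀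
      = 2 * s₀ + (α - τ * (β + α * s₀)) * Complex.exp (-s₀ * τ) ∧
    iteratedDeriv 2 (fun s : ℂ => s ^ 2 + 1 + (β + α * s) * Complex.exp (-s * τ)) s₀
      = 2 + (τ ^ 2 * (β + α * s₀) - 2 * α * τ) * Complex.exp (-s₀ * τ) := by
  have hdf : deriv (fun s : ℂ => s ^ 2 + 1 + (β + α * s) * Complex.exp (-s * τ))
      = fun s : ℂ => 2 * s + (α - τ * (β + α * s)) * Complex.exp (-s * τ) :=
    funext fun s => (osc_hd1 α β τ s).deriv
  refine ⟨by simp [iteratedDeriv_zero], ?_, ?_⟩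
  · rw [iteratedDeriv_one, hdf]
  · rw [show (2:ℕ) = 1 + 1 from rfl, iteratedDeriv_succ, iteratedDeriv_one, hdf]
    exact (osc_hd2 α β τ s₀).deriv

/-- For the delayed-feedback harmonic oscillator with characteristic function
`Δ(s) = s² + 1 + (β + αs) e^{-sτ}`, given `τ > 0` and `s₀ ∈ ℝ`, there exist
real `α`, `β` making `s₀` a root of `Δ` of multiplicity at least `3`
(`Δ(s₀) = Δ'(s₀) = Δ''(s₀) = 0`) if and only if
`τ²(s₀² + 1) + 4τs₀ + 2 = 0`. -/
theorem oscillator_admissibility_condition (τ : ℝ) (hτ : 0 < τ) (s₀ : ℝ) :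
    (∃ α β : ℝ, ∀ j ≤ 2, iteratedDeriv j
        (fun s : ℂ => s ^ 2 + 1 + ((β : ℂ) + (α : ℂ) * s) * Complex.exp (-s * (τ : ℂ)))
        (s₀ : ℂ) = 0)
      ↔ τ ^ 2 * (s₀ ^ 2 + 1) + 4 * τ * s₀ + 2 = 0 := by
  constructor
  · rintro ⟨α, β, h⟩
    obtain ⟨d0, d1, d2⟩ := osc_derivs (α : ℂ) (β : ℂ) (τ : ℂ) (s₀ : ℂ)
    have e0 := (h 0 (by norm_num)).symm.trans d0
    have e1 := (h 1 (by norm_num)).symm.trans d1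
    have e2 := (h 2 (by norm_num)).symm.trans d2
    have hc : ((τ ^ 2 * (s₀ ^ 2 + 1) + 4 * τ * s₀ + 2 : ℝ) : ℂ) = 0 := by
      push_cast
      linear_combination (τ : ℂ) ^ 2 * e0.symm + 2 * (τ : ℂ) * e1.symm + e2.symm
    exact_mod_cast hc
  · intro hcond
    set e := Real.exp (-s₀ * τ) with he_def
    have he : e ≠ 0 := Real.exp_ne_zero _
    have hE : Complex.exp (-(s₀ : ℂ) * (τ : ℂ)) = (e : ℂ) := by
      rw [he_def, Complex.ofReal_exp]; push_cast; ring_nf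
    refine ⟨(-2 * s₀ - τ * (s₀ ^ 2 + 1)) / e,
      (-(s₀ ^ 2 + 1) + (2 * s₀ + τ * (s₀ ^ 2 + 1)) * s₀) / e, ?_⟩
    obtain ⟨d0, d1, d2⟩ := osc_derivs _ _ (τ : ℂ) (s₀ : ℂ)
    intro j hj
    have heC : (e : ℂ) ≠ 0 := by exact_mod_cast he
    interval_cases j
    · rw [d0, hE]; push_cast; field_simp; ring
    · rw [d1, hE]; push_cast; field_simp; ring
    · have hcondC : (τ : ℂ) ^ 2 * ((s₀ : ℂ) ^ 2 + 1) + 4 * (τ : ℂ) * (s₀ : ℂ) + 2 = 0 := by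
        exact_mod_cast congrArg (Complex.ofReal) hcond
      rw [d2, hE]; push_cast; field_simp
      linear_combination hcondC
end

section
/- Let s_0 ∈ ℝ and suppose there exist α, β ∈ ℝ such that s_0 is a root of multiplicity at least 3 of Δ(s) = s² + 1 + (β + α s) e^{-s} (delay τ = 1). Then s_0 = −1 or s_0 = −3. Conversely, for each of s_0 = −1 and s_0 = −3 there exist α, β ∈ ℝ making s_0 such a root of multiplicity at least 3. -/
private lemma osc_deriv1 (α β : ℝ) :
    deriv (fun s : ℂ => s ^ 2 + 1 + ((β : ℂ) + (α : ℂ) * s) * Complex.exp (-s))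
      = fun s : ℂ => 2 * s + ((α : ℂ) - β - α * s) * Complex.exp (-s) := by
  funext s
  have hexp : HasDerivAt (fun s : ℂ => Complex.exp (-s)) (-Complex.exp (-s)) s := by
    simpa [Function.comp_def] using (Complex.hasDerivAt_exp (-s)).comp s (hasDerivAt_neg s)
  have hlin : HasDerivAt (fun s : ℂ => (β : ℂ) + (α : ℂ) * s) (α : ℂ) s := by
    simpa using ((hasDerivAt_id s).const_mul (α : ℂ)).const_add (β : ℂ)
  have hpoly : HasDerivAt (fun s : ℂ => s ^ 2 + 1) (2 * s) s := by
    simpa using (hasDerivAt_pow 2 s).add_const (1 : ℂ)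
  have h := hpoly.add (hlin.mul hexp)
  rw [HasDerivAt.deriv (f := fun s : ℂ => s ^ 2 + 1 + ((β : ℂ) + (α : ℂ) * s) * Complex.exp (-s)) h]
  ring

private lemma osc_deriv2 (α β : ℝ) :
    deriv (fun s : ℂ => 2 * s + ((α : ℂ) - β - α * s) * Complex.exp (-s))
      = fun s : ℂ => 2 + ((β : ℂ) + α * s - 2 * α) * Complex.exp (-s) := by
  funext s
  have hexp : HasDerivAt (fun s : ℂ => Complex.exp (-s)) (-Complex.exp (-s)) s := by
    simpa [Function.comp_def] using (Complex.hasDerivAt_exp (-s)).comp s (hasDerivAt_neg s)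
  have hlin : HasDerivAt (fun s : ℂ => (α : ℂ) - β - α * s) (-(α : ℂ)) s := by
    have := (((hasDerivAt_id s).const_mul (α : ℂ)).const_sub ((α : ℂ) - β))
    simpa [sub_sub] using this
  have hpoly : HasDerivAt (fun s : ℂ => 2 * s) (2 : ℂ) s := by
    simpa using (hasDerivAt_id s).const_mul (2 : ℂ)
  have h := hpoly.add (hlin.mul hexp)
  rw [HasDerivAt.deriv (f := fun s : ℂ => 2 * s + ((α : ℂ) - β - α * s) * Complex.exp (-s)) h]
  ring

private lemma iterTwo (f : ℂ → ℂ) : iteratedDeriv 2 f = deriv (deriv f) := by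
  rw [show (2 : ℕ) = 1 + 1 from rfl, iteratedDeriv_succ, iteratedDeriv_one]

/-- For the delayed-feedback harmonic oscillator with delay `τ = 1` and
characteristic function `Δ(s) = s² + 1 + (β + αs) e^{-s}`, a real point `s₀`
can be assigned as a root of multiplicity at least `3` (for some choice of
real `α`, `β`) if and only if `s₀ = -1` or `s₀ = -3`. -/
theorem oscillator_delay_one_triple_roots (s₀ : ℝ) :
    (∃ α β : ℝ, ∀ j ≤ 2, iteratedDeriv j
        (fun s : ℂ => s ^ 2 + 1 + ((β : ℂ) + (α : ℂ) * s) * Complex.exp (-s))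
        (s₀ : ℂ) = 0)
      ↔ s₀ = -1 ∨ s₀ = -3 := by
  constructor
  · rintro ⟨α, β, h⟩
    have h0 := h 0 (by norm_num)
    have h1 := h 1 (by norm_num)
    have h2 := h 2 (by norm_num)
    rw [iteratedDeriv_zero] at h0
    rw [iteratedDeriv_one, osc_deriv1] at h1
    rw [iterTwo, osc_deriv1, osc_deriv2] at h2
    simp only at h0 h1 h2
    have key : ((s₀ : ℂ) + 1) * ((s₀ : ℂ) + 3) = 0 := by
      linear_combination h0 + 2 * h1 + h2
    rcases mul_eq_zero.1 key with hk | hk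
    · left
      have : (s₀ : ℂ) = -1 := by linear_combination hk
      exact_mod_cast this
    · right
      have : (s₀ : ℂ) = -3 := by linear_combination hk
      exact_mod_cast this
  · rintro (rfl | rfl)
    · refine ⟨0, -2 * Real.exp (-1), ?_⟩
      have hfact : Complex.exp (-1 : ℂ) * Complex.exp (1 : ℂ) = 1 := by
        rw [← Complex.exp_add]; norm_num
      intro j hj
      interval_cases j
      · rw [iteratedDeriv_zero]
        push_cast [Complex.ofReal_exp]
        rw [neg_neg]
        linear_combination (-2 : ℂ) * hfact
      · rw [iteratedDeriv_one, osc_deriv1]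
        push_cast [Complex.ofReal_exp]
        rw [neg_neg]
        linear_combination (2 : ℂ) * hfact
      · rw [iterTwo, osc_deriv1, osc_deriv2]
        push_cast [Complex.ofReal_exp]
        rw [neg_neg]
        linear_combination (-2 : ℂ) * hfact
    · refine ⟨-4 * Real.exp (-3), -22 * Real.exp (-3), ?_⟩
      have hfact : Complex.exp (-3 : ℂ) * Complex.exp (3 : ℂ) = 1 := by
        rw [← Complex.exp_add]; norm_num
      intro j hj
      interval_cases j
      · rw [iteratedDeriv_zero]
        push_cast [Complex.ofReal_exp]
        rw [neg_neg]
        linear_combination (-10 : ℂ) * hfact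
      · rw [iteratedDeriv_one, osc_deriv1]
        push_cast [Complex.ofReal_exp]
        rw [neg_neg]
        linear_combination (6 : ℂ) * hfact
      · rw [iterTwo, osc_deriv1, osc_deriv2]
        push_cast [Complex.ofReal_exp]
        rw [neg_neg]
        linear_combination (-2 : ℂ) * hfact
end

section
/- Let τ > 0, s_0 ∈ ℝ, and α, β ∈ ℝ, and suppose s_0 is a root of multiplicity at least 3 of Δ(s) = s² + 1 + (β + α s) e^{-sτ} (i.e., Δ(s_0) = Δ'(s_0) = Δ''(s_0) = 0). Then s_0 ≤ −1. -/
open Complex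

private lemma osc_hasDeriv1 (τ α β : ℝ) (s : ℂ) :
    HasDerivAt (fun s : ℂ => s ^ 2 + 1 + ((β : ℂ) + (α : ℂ) * s) * Complex.exp (-s * (τ : ℂ)))
      (2 * s + ((α : ℂ) - (τ : ℂ) * ((β : ℂ) + (α : ℂ) * s)) * Complex.exp (-s * (τ : ℂ))) s := by
  have hlin : HasDerivAt (fun s : ℂ => -s * (τ : ℂ)) (-(τ : ℂ)) s := by
    simpa using ((hasDerivAt_id s).neg.mul_const (τ : ℂ))
  have hg := hlin.cexp
  have hp : HasDerivAt (fun s : ℂ => (β : ℂ) + (α : ℂ) * s) (α : ℂ) s := by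
    simpa using ((hasDerivAt_id s).const_mul (α : ℂ)).const_add (β : ℂ)
  have hq := hp.mul hg
  have hs : HasDerivAt (fun s : ℂ => s ^ 2 + 1) (2 * s) s := by
    simpa using (hasDerivAt_pow 2 s).add_const (1 : ℂ)
  have := hs.add hq
  exact this.congr_deriv (by ring)

private lemma osc_hasDeriv2 (τ α β : ℝ) (s : ℂ) :
    HasDerivAt (fun s : ℂ => 2 * s + ((α : ℂ) - (τ : ℂ) * ((β : ℂ) + (α : ℂ) * s)) * Complex.exp (-s * (τ : ℂ)))
      (2 + ((τ : ℂ) ^ 2 * ((β : ℂ) + (α : ℂ) * s) - 2 * (τ : ℂ) * (α : ℂ)) * Complex.exp (-s * (τ : ℂ))) s := by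
  have hlin : HasDerivAt (fun s : ℂ => -s * (τ : ℂ)) (-(τ : ℂ)) s := by
    simpa using ((hasDerivAt_id s).neg.mul_const (τ : ℂ))
  have hg := hlin.cexp
  have hp : HasDerivAt (fun s : ℂ => (α : ℂ) - (τ : ℂ) * ((β : ℂ) + (α : ℂ) * s))
      (-((τ : ℂ) * (α : ℂ))) s := by
    have h1 : HasDerivAt (fun s : ℂ => (β : ℂ) + (α : ℂ) * s) (α : ℂ) s := by
      simpa using ((hasDerivAt_id s).const_mul (α : ℂ)).const_add (β : ℂ)
    simpa [mul_comm] using (h1.const_mul (τ : ℂ)).const_sub (α : ℂ)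
  have hq := hp.mul hg
  have hs : HasDerivAt (fun s : ℂ => 2 * s) (2 : ℂ) s := by
    simpa using (hasDerivAt_id s).const_mul (2 : ℂ)
  have := hs.add hq
  exact this.congr_deriv (by ring)

/-- If `τ > 0`, `s₀ ∈ ℝ`, and `α, β ∈ ℝ` are such that `s₀` is a root of
multiplicity at least `3` of `Δ(s) = s² + 1 + (β + αs) e^{-sτ}`
(i.e. `Δ(s₀) = Δ'(s₀) = Δ''(s₀) = 0`), then `s₀ ≤ -1`. -/
theorem oscillator_triple_root_le_neg_one
    (τ : ℝ) (hτ : 0 < τ) (s₀ α β : ℝ)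
    (h : ∀ j ≤ 2, iteratedDeriv j
      (fun s : ℂ => s ^ 2 + 1 + ((β : ℂ) + (α : ℂ) * s) * Complex.exp (-s * (τ : ℂ)))
      (s₀ : ℂ) = 0) :
    s₀ ≤ -1 := by
  set f : ℂ → ℂ := fun s : ℂ => s ^ 2 + 1 + ((β : ℂ) + (α : ℂ) * s) * Complex.exp (-s * (τ : ℂ))
    with hf
  have hderiv : deriv f = fun s : ℂ =>
      2 * s + ((α : ℂ) - (τ : ℂ) * ((β : ℂ) + (α : ℂ) * s)) * Complex.exp (-s * (τ : ℂ)) := by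
    funext s
    exact (osc_hasDeriv1 τ α β s).deriv
  have h0 := h 0 (by norm_num)
  have h1 := h 1 (by norm_num)
  have h2 := h 2 (by norm_num)
  rw [iteratedDeriv_zero] at h0
  rw [iteratedDeriv_one, hderiv] at h1
  rw [show (2 : ℕ) = 1 + 1 from rfl, iteratedDeriv_succ, iteratedDeriv_one, hderiv] at h2
  have h2' : (2 : ℂ) + ((τ : ℂ) ^ 2 * ((β : ℂ) + (α : ℂ) * s₀) - 2 * (τ : ℂ) * (α : ℂ)) *
      Complex.exp (-(s₀ : ℂ) * (τ : ℂ)) = 0 := by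
    rw [← (osc_hasDeriv2 τ α β (s₀ : ℂ)).deriv]
    exact h2
  -- convert to real equations
  have hexp : Complex.exp (-(s₀ : ℂ) * (τ : ℂ)) = ((Real.exp (-(s₀ * τ)) : ℝ) : ℂ) := by
    rw [Complex.ofReal_exp]
    push_cast
    ring_nf
  set E : ℝ := Real.exp (-(s₀ * τ)) with hE
  have e0 : s₀ ^ 2 + 1 + (β + α * s₀) * E = 0 := by
    have : ((s₀ ^ 2 + 1 + (β + α * s₀) * E : ℝ) : ℂ) = 0 := by
      push_cast
      rw [← hexp]
      simpa [hf] using h0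
    exact_mod_cast this
  have e1 : 2 * s₀ + (α - τ * (β + α * s₀)) * E = 0 := by
    have : ((2 * s₀ + (α - τ * (β + α * s₀)) * E : ℝ) : ℂ) = 0 := by
      push_cast
      rw [← hexp]
      simpa using h1
    exact_mod_cast this
  have e2 : 2 + (τ ^ 2 * (β + α * s₀) - 2 * τ * α) * E = 0 := by
    have : ((2 + (τ ^ 2 * (β + α * s₀) - 2 * τ * α) * E : ℝ) : ℂ) = 0 := by
      push_cast
      rw [← hexp]
      simpa using h2'
    exact_mod_cast this
  have key : τ ^ 2 * (s₀ ^ 2 + 1) + 4 * τ * s₀ + 2 = 0 := by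
    linear_combination e2 + τ ^ 2 * e0 + 2 * τ * e1
  by_contra hcon
  push_neg at hcon
  have hs2 : (τ * (s₀ ^ 2 + 1) + 2 * s₀) ^ 2 = 2 * s₀ ^ 2 - 2 := by
    linear_combination (s₀ ^ 2 + 1) * key
  have hs1 : 1 ≤ s₀ ^ 2 := by nlinarith [sq_nonneg (τ * (s₀ ^ 2 + 1) + 2 * s₀)]
  have hge : 1 ≤ s₀ := by nlinarith
  nlinarith [mul_pos hτ hτ, mul_nonneg hτ.le (show (0:ℝ) ≤ s₀ - 1 by linarith), sq_nonneg τ]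
end

section
/- Every root s ∈ ℂ of the quasipolynomial Δ(s) = s² + 1 − (2/e) e^{-s} satisfies Re s ≤ −1. Consequently the spectral abscissa γ = sup{Re s : Δ(s) = 0} equals −1, and in particular γ < 0. -/
open intervalIntegral in
lemma F_ne_zero (z : ℂ) (hx : 0 < z.re) :
    z ^ 2 - 2 * z + 2 - 2 * Complex.exp (-z) ≠ 0 := by
  set J : ℂ := ∫ t in (0:ℝ)..1, ((1:ℂ) - (t:ℂ)) * Complex.exp (-(z * t)) with hJdef
  have hz : z ≠ 0 := fun h => by simp [h] at hx
  -- FTC: z^2 * J = exp(-z) - 1 + z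
  have hderiv : ∀ t ∈ Set.uIcc (0:ℝ) 1, HasDerivAt
      (fun t : ℝ => (1 - z * (1 - (t:ℂ))) * Complex.exp (-(z * t)))
      (z ^ 2 * (((1:ℂ) - (t:ℂ)) * Complex.exp (-(z * t)))) t := by
    intro t _
    have h0 : HasDerivAt (fun t : ℝ => (t : ℂ)) 1 t := by
      exact Complex.ofRealCLM.hasDerivAt
    have h1 : HasDerivAt (fun t : ℝ => (1 - z * (1 - (t:ℂ)))) z t := by
      simpa using ((h0.const_sub 1).const_mul z).const_sub 1
    have h2 : HasDerivAt (fun t : ℝ => -(z * (t:ℂ))) (-z) t := by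
      simpa using ((h0.const_mul z).fun_neg)
    have h3 : HasDerivAt (fun t : ℝ => Complex.exp (-(z * t)))
        (Complex.exp (-(z * t)) * (-z)) t := h2.cexp
    have := h1.fun_mul h3
    refine this.congr_deriv ?_
    ring
  have hint : IntervalIntegrable
      (fun t : ℝ => z ^ 2 * (((1:ℂ) - (t:ℂ)) * Complex.exp (-(z * t)))) MeasureTheory.volume 0 1 :=
    ((Continuous.intervalIntegrable (by fun_prop) 0 1))
  have key : z ^ 2 * J = Complex.exp (-z) - 1 + z := by
    have h := intervalIntegral.integral_eq_sub_of_hasDerivAt hderiv hint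
    rw [hJdef, ← intervalIntegral.integral_const_mul, h]
    push_cast
    simp only [mul_one, sub_zero, mul_zero, neg_zero, Complex.exp_zero]
    ring
  -- norm bound
  have hre : ∀ t : ℝ, (-(z * (t:ℂ))).re = -(z.re * t) := by
    intro t; simp [Complex.mul_re]
  have hb : ‖J‖ ≤ ∫ t in (0:ℝ)..1, (1 - t) * Real.exp (-(z.re * t)) := by
    rw [hJdef]
    have hbnd : ∀ᵐ (t : ℝ) ∂(MeasureTheory.volume.restrict (Set.uIoc (0:ℝ) 1)),
        ‖((1:ℂ) - (t:ℂ)) * Complex.exp (-(z * t))‖ ≤ (1 - t) * Real.exp (-(z.re * t)) := by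
      filter_upwards [MeasureTheory.ae_restrict_mem measurableSet_uIoc] with t ht
      rw [Set.uIoc_of_le zero_le_one] at ht
      rw [norm_mul, Complex.norm_exp, hre]
      have h1 : ‖(1:ℂ) - (t:ℂ)‖ = 1 - t := by
        rw [show (1:ℂ) - (t:ℂ) = ((1 - t : ℝ) : ℂ) by push_cast; ring,
          Complex.norm_real, Real.norm_eq_abs, abs_of_nonneg (by linarith [ht.2])]
      rw [h1]
    refine (intervalIntegral.norm_integral_le_abs_of_norm_le hbnd
      (Continuous.intervalIntegrable (by fun_prop) 0 1)).trans (le_of_eq (abs_of_nonneg ?_))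
    apply intervalIntegral.integral_nonneg zero_le_one
    intro u hu
    have : Real.exp (-(z.re * u)) > 0 := Real.exp_pos _
    nlinarith [hu.2]
  have hlt : (∫ t in (0:ℝ)..1, (1 - t) * Real.exp (-(z.re * t))) < 1/2 := by
    have : (∫ t in (0:ℝ)..1, (1 - t) * Real.exp (-(z.re * t)))
        < ∫ t in (0:ℝ)..1, (1 - t) := by
      apply intervalIntegral.integral_lt_integral_of_continuousOn_of_le_of_exists_lt one_pos
        (by fun_prop) (by fun_prop)
      · intro t ht
        have he : Real.exp (-(z.re * t)) ≤ 1 := by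
          rw [Real.exp_le_one_iff]
          nlinarith [ht.1]
        nlinarith [ht.2, he]
      · refine ⟨1/2, by norm_num, ?_⟩
        have he : Real.exp (-(z.re * (1/2))) < 1 := by
          rw [Real.exp_lt_one_iff]; linarith
        nlinarith
    have h2 : (∫ t in (0:ℝ)..1, (1 - t)) = 1/2 := by
      rw [intervalIntegral.integral_sub intervalIntegrable_const
        intervalIntegral.intervalIntegrable_id]
      simp
      norm_num
    rw [h2] at this
    linarith
  have hJ2 : (1 : ℂ) - 2 * J ≠ 0 := by
    intro h
    have : (1 : ℂ) = 2 * J := by linear_combination h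
    have := congrArg norm this
    rw [norm_mul] at this
    simp only [norm_one] at this
    have h2 : ‖(2:ℂ)‖ = 2 := by norm_num
    rw [h2] at this
    nlinarith [norm_nonneg J]
  have hfact : z ^ 2 - 2 * z + 2 - 2 * Complex.exp (-z) = z ^ 2 * (1 - 2 * J) := by
    linear_combination (2 : ℂ) * key
  rw [hfact]
  exact mul_ne_zero (pow_ne_zero 2 hz) hJ2

/-- Multiplicity-induced dominancy for the harmonic oscillator example: every
root `s ∈ ℂ` of `Δ(s) = s² + 1 - (2/e) e^{-s}` satisfies `Re s ≤ -1`;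
consequently the spectral abscissa `γ = sup {Re s : Δ(s) = 0}` equals `-1`,
and in particular `γ < 0`. -/
theorem oscillator_spectral_abscissa :
    (∀ s : ℂ,
        s ^ 2 + 1 - ((2 / Real.exp 1 : ℝ) : ℂ) * Complex.exp (-s) = 0 → s.re ≤ -1)
      ∧ sSup {x : ℝ | ∃ s : ℂ,
          s ^ 2 + 1 - ((2 / Real.exp 1 : ℝ) : ℂ) * Complex.exp (-s) = 0 ∧ x = s.re} = -1
      ∧ sSup {x : ℝ | ∃ s : ℂ,
          s ^ 2 + 1 - ((2 / Real.exp 1 : ℝ) : ℂ) * Complex.exp (-s) = 0 ∧ x = s.re} < 0 := by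
  have hcoef : ((2 / Real.exp 1 : ℝ) : ℂ) = 2 * Complex.exp (-1) := by
    rw [Complex.ofReal_div, Complex.ofReal_ofNat, Complex.ofReal_exp, Complex.ofReal_one,
      Complex.exp_neg, div_eq_mul_inv]
  have part1 : ∀ s : ℂ,
      s ^ 2 + 1 - ((2 / Real.exp 1 : ℝ) : ℂ) * Complex.exp (-s) = 0 → s.re ≤ -1 := by
    intro s hs
    by_contra h
    push_neg at h
    have hzre : 0 < (s + 1).re := by simp [Complex.add_re]; linarith
    apply F_ne_zero (s + 1) hzre
    have h2 : ((2 / Real.exp 1 : ℝ) : ℂ) * Complex.exp (-s) = 2 * Complex.exp (-(s + 1)) := by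
      rw [hcoef, neg_add, Complex.exp_add]
      ring
    linear_combination hs + h2
  have hmem : (-1 : ℝ) ∈ {x : ℝ | ∃ s : ℂ,
      s ^ 2 + 1 - ((2 / Real.exp 1 : ℝ) : ℂ) * Complex.exp (-s) = 0 ∧ x = s.re} := by
    refine ⟨-1, ?_, by simp⟩
    rw [hcoef, neg_neg]
    rw [show (2 : ℂ) * Complex.exp (-1) * Complex.exp 1 = 2 * Complex.exp (-1 + 1) by
      rw [Complex.exp_add]; ring]
    norm_num
  have hbdd : BddAbove {x : ℝ | ∃ s : ℂ,
      s ^ 2 + 1 - ((2 / Real.exp 1 : ℝ) : ℂ) * Complex.exp (-s) = 0 ∧ x = s.re} :=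
    ⟨-1, fun x ⟨s, hs, hx⟩ => hx ▸ part1 s hs⟩
  have heq : sSup {x : ℝ | ∃ s : ℂ,
      s ^ 2 + 1 - ((2 / Real.exp 1 : ℝ) : ℂ) * Complex.exp (-s) = 0 ∧ x = s.re} = -1 := by
    apply le_antisymm
    · exact csSup_le ⟨-1, hmem⟩ (fun x ⟨s, hs, hx⟩ => hx ▸ part1 s hs)
    · exact le_csSup hbdd hmem
  exact ⟨part1, heq, heq ▸ by norm_num⟩
end
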